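/- For the sequence x_0 = 1, x_{k+1} = x_k + sqrt(1 + 1/x_k), one has k + 1 ≤ x_k and x_k / k → 1 as k → ∞. -/

import Mathlib

open Filter

theorem stmt_11 (x : ℕ → ℝ)
    (h0 : x 0 = 1)
    (hrec : ∀ k, x (k + 1) = x k + Real.sqrt (1 + 1 / x k)) :
    (∀ k : ℕ, (k : ℝ) + 1 ≤ x k) ∧
      Tendsto (fun k : ℕ => x k / (k : ℝ)) atTop (nhds 1) := by
  have hx : ∀ k : ℕ, (k : ℝ) + 1 ≤ x k := by
    intro k
    induction k with
    | zero => simp [h0]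
    | succ n ih =>
      have hpos : 0 < x n := lt_of_lt_of_le (by positivity) ih
      have h1 : (1 : ℝ) ≤ Real.sqrt (1 + 1 / x n) := by
        have hnn : (0:ℝ) ≤ 1 + 1 / x n := by positivity
        nlinarith [Real.sq_sqrt hnn, Real.sqrt_nonneg (1 + 1 / x n), div_pos one_pos hpos]
      rw [hrec]
      push_cast
      linarith
  have hpos : ∀ k, 0 < x k := fun k => lt_of_lt_of_le (by positivity) (hx k)
  refine ⟨hx, ?_⟩
  -- x k = 1 + ∑_{i<k} sqrt(1 + 1/x i)
  have hsum : ∀ k, x k = 1 + ∑ i ∈ Finset.range k, Real.sqrt (1 + 1 / x i) := by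
    intro k
    induction k with
    | zero => simp [h0]
    | succ n ih => rw [Finset.sum_range_succ, hrec, ih]; ring
  -- sqrt(1 + 1/x i) → 1
  have hinv : Tendsto (fun i : ℕ => 1 / x i) atTop (nhds 0) := by
    apply squeeze_zero (fun i => (div_pos one_pos (hpos i)).le) (fun i => ?_)
      (tendsto_one_div_add_atTop_nhds_zero_nat)
    exact one_div_le_one_div_of_le (by positivity) (hx i)
  have hu : Tendsto (fun i : ℕ => Real.sqrt (1 + 1 / x i)) atTop (nhds 1) := by
    have : Tendsto (fun i : ℕ => 1 + 1 / x i) atTop (nhds 1) := by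
      simpa using tendsto_const_nhds.add hinv
    have := (Real.continuous_sqrt.tendsto 1).comp this
    simpa [Function.comp_def] using this
  have hc := hu.cesaro
  have h0' : Tendsto (fun k : ℕ => 1 / (k : ℝ)) atTop (nhds 0) :=
    tendsto_one_div_atTop_nhds_zero_nat
  have := h0'.add hc
  rw [zero_add] at this
  apply this.congr'
  filter_upwards [eventually_gt_atTop 0] with k hk
  have hk' : (k : ℝ) ≠ 0 := Nat.cast_ne_zero.mpr hk.ne'
  rw [hsum k]
  field_simp
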